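/- arXiv:1408.3601 — 5 statements merged into one kernel-verified Lean document; each statement's English description precedes it below -/
import Mathlib

section
/- Let ν denote the 2-adic valuation and α the binary digit sum. For positive integers t and B, if j is an integer with 0 < |2^{t+1}·B - j| < 2^{t+1} and 0 ≤ j ≤ 2^{t+2}·B, then ν(C(2^{t+2}·B, j)) > α(B). -/
/-- `α n` is the number of 1's in the binary expansion of `n`. -/
def binaryDigitSum (n : ℕ) : ℕ := (Nat.digits 2 n).sum

lemma alphaA (k a b : ℕ) (hb : b < 2 ^ k) :
    binaryDigitSum (2 ^ k * a + b) = binaryDigitSum a + binaryDigitSum b := by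
  rcases Nat.eq_zero_or_pos a with rfl | ha
  · simp [binaryDigitSum]
  · have hlen : (Nat.digits 2 b).length ≤ k := by
      rcases Nat.eq_zero_or_pos b with rfl | hbpos
      · simp
      · rw [Nat.digits_len 2 b one_lt_two hbpos.ne']
        have := (Nat.log_lt_iff_lt_pow one_lt_two hbpos.ne').mpr hb
        omega
    have h := Nat.digits_append_zeroes_append_digits
      (b := 2) (k := k - (Nat.digits 2 b).length) (m := a) (n := b) one_lt_two ha
    rw [Nat.add_sub_cancel' hlen] at h
    unfold binaryDigitSum
    rw [add_comm (2 ^ k * a) b, ← h]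
    simp [List.sum_append, add_comm]

lemma alphaPos : ∀ {n : ℕ}, 0 < n → 0 < binaryDigitSum n := by
  intro n
  induction n using Nat.strong_induction_on with
  | _ n ih =>
    intro hn
    have h2 : n = 2 ^ 1 * (n / 2) + n % 2 := by omega
    rw [h2, alphaA 1 (n / 2) (n % 2) (by omega)]
    rcases Nat.eq_zero_or_pos (n % 2) with h | h
    · have : 0 < n / 2 := by omega
      have := ih (n / 2) (by omega) this
      omega
    · have : n % 2 = 1 := by omega
      have : 0 < binaryDigitSum (n % 2) := by
        rw [this]; simp [binaryDigitSum]
      omega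

lemma alphaSub1 : ∀ {B : ℕ}, 0 < B → binaryDigitSum B ≤ binaryDigitSum (B - 1) + 1 := by
  intro B
  induction B using Nat.strong_induction_on with
  | _ B ih =>
    intro hB
    rcases Nat.eq_or_lt_of_le hB with h1 | h1
    · rw [← h1]; simp [binaryDigitSum]
    rcases Nat.even_or_odd B with ⟨C, hC⟩ | ⟨C, hC⟩
    · -- B = 2C, C ≥ 1
      have hC1 : 0 < C := by omega
      have e1 : binaryDigitSum B = binaryDigitSum C := by
        have : B = 2 ^ 1 * C + 0 := by omega
        rw [this, alphaA 1 C 0 (by omega)]; simp [binaryDigitSum]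
      have e2 : binaryDigitSum (B - 1) = binaryDigitSum (C - 1) + 1 := by
        have : B - 1 = 2 ^ 1 * (C - 1) + 1 := by omega
        rw [this, alphaA 1 (C - 1) 1 (by omega)]
        simp [binaryDigitSum]
      have := ih C (by omega) hC1
      omega
    · -- B = 2C + 1
      have e1 : binaryDigitSum B = binaryDigitSum C + 1 := by
        have : B = 2 ^ 1 * C + 1 := by omega
        rw [this, alphaA 1 C 1 (by omega)]; simp [binaryDigitSum]
      have e2 : binaryDigitSum (B - 1) = binaryDigitSum C := by
        have : B - 1 = 2 ^ 1 * C + 0 := by omega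
        rw [this, alphaA 1 C 0 (by omega)]; simp [binaryDigitSum]
      omega

theorem stmt4 (t B : ℕ) (ht : 0 < t) (hB : 0 < B) (j : ℕ)
    (hj : j ≤ 2 ^ (t + 2) * B)
    (h1 : 0 < |(2 ^ (t + 1) * B : ℤ) - j|)
    (h2 : |(2 ^ (t + 1) * B : ℤ) - j| < 2 ^ (t + 1)) :
    padicValNat 2 (Nat.choose (2 ^ (t + 2) * B) j) > binaryDigitSum B := by
  set P : ℕ := 2 ^ (t + 1) with hP
  set e : ℕ := ((2 ^ (t + 1) * B : ℤ) - j).natAbs with he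
  have hPpos : 0 < P := Nat.pow_pos (by norm_num)
  have habs : ((P * B : ℕ) : ℤ) - (j : ℤ) = (2 ^ (t + 1) * B : ℤ) - j := by
    push_cast [hP]; ring
  have he' : e = (((P * B : ℕ) : ℤ) - (j : ℤ)).natAbs := by rw [he, habs]
  have hx0 : (2 ^ (t + 1) * B : ℤ) - j ≠ 0 := by
    intro h0; rw [h0] at h1; simp at h1
  have he1 : 1 ≤ e := Int.natAbs_pos.mpr hx0
  have he2 : e < P := by
    have hlt : ((e : ℕ) : ℤ) < ((P : ℕ) : ℤ) := by
      rw [he, ← Int.abs_eq_natAbs, hP]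
      push_cast
      exact h2
    exact_mod_cast hlt
  have hePB : e ≤ P * B := le_trans he2.le (Nat.le_mul_of_pos_right P hB)
  have hcases : j + e = P * B ∨ j = P * B + e := by omega
  -- m = 2^(t+2)*B = P*B + P*B
  have hm : 2 ^ (t + 2) * B = P * B + P * B := by
    rw [hP]; ring
  have hPB1 : P * (B - 1) + P = P * B := by
    rw [Nat.mul_sub, Nat.mul_one]
    have : P ≤ P * B := Nat.le_mul_of_pos_right P hB
    omega
  have hsplit_sub : P * B - e = 2 ^ (t + 1) * (B - 1) + (P - e) := by
    rw [← hP]; omega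
  have hsplit_add : P * B + e = 2 ^ (t + 1) * B + e := by rw [hP]
  have hadd : binaryDigitSum (P * B + e) = binaryDigitSum B + binaryDigitSum e := by
    rw [hsplit_add, alphaA (t + 1) B e (by rw [← hP]; exact he2)]
  have hsub : binaryDigitSum (P * B - e)
      = binaryDigitSum (B - 1) + binaryDigitSum (P - e) := by
    rw [hsplit_sub, alphaA (t + 1) (B - 1) (P - e) (by rw [← hP]; omega)]
  have hαm : binaryDigitSum (2 ^ (t + 2) * B) = binaryDigitSum B := by
    have : 2 ^ (t + 2) * B = 2 ^ (t + 2) * B + 0 := by omega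
    rw [this, alphaA (t + 2) B 0 (Nat.pow_pos (by norm_num))]
    simp [binaryDigitSum]
  have hK := sub_one_mul_padicValNat_choose_eq_sub_sum_digits (p := 2)
    (k := j) (n := 2 ^ (t + 2) * B) hj
  have hαe : 0 < binaryDigitSum e := alphaPos he1
  have hαPe : 0 < binaryDigitSum (P - e) := alphaPos (by omega)
  have hαB1 : binaryDigitSum B ≤ binaryDigitSum (B - 1) + 1 := alphaSub1 hB
  have hS : binaryDigitSum j + binaryDigitSum (2 ^ (t + 2) * B - j)
      ≥ 2 * binaryDigitSum B + 1 := by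
    rcases hcases with h | h
    · have hj' : j = P * B - e := by omega
      have hmj : 2 ^ (t + 2) * B - j = P * B + e := by omega
      rw [hmj, hj', hadd, hsub]
      omega
    · have hmj : 2 ^ (t + 2) * B - j = P * B - e := by omega
      rw [hmj, h, hadd, hsub]
      omega
  simp only [show (2 : ℕ) - 1 = 1 from rfl, one_mul] at hK
  have hK' : padicValNat 2 (Nat.choose (2 ^ (t + 2) * B) j)
      = binaryDigitSum j + binaryDigitSum (2 ^ (t + 2) * B - j)
        - binaryDigitSum (2 ^ (t + 2) * B) := hK
  omega
end

section
/- Let ν denote the 2-adic valuation and α the binary digit sum. For positive integers t and B with B ≥ 2, and for every integer j with (B-2)·2^t < j < (B+1)·2^t: ν(C((2B-1)·2^t, j)) = α(B) - 1 if j = (B-1)·2^t or j = B·2^t, and ν(C((2B-1)·2^t, j)) > α(B) - 1 for all other such j. -/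
namespace Stmt5Aux

lemma alpha_two_mul_add_one (m : ℕ) :
    binaryDigitSum (2 * m + 1) = binaryDigitSum m + 1 := by
  unfold binaryDigitSum
  rw [Nat.digits_def' (by norm_num : 1 < 2) (by omega)]
  have h1 : (2 * m + 1) % 2 = 1 := by omega
  have h2 : (2 * m + 1) / 2 = m := by omega
  rw [h1, h2]
  simp [add_comm]

lemma alpha_two_mul (m : ℕ) (hm : 0 < m) :
    binaryDigitSum (2 * m) = binaryDigitSum m := by
  unfold binaryDigitSum
  rw [Nat.digits_def' (by norm_num : 1 < 2) (by omega)]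
  have h1 : (2 * m) % 2 = 0 := by omega
  have h2 : (2 * m) / 2 = m := by omega
  rw [h1, h2]
  simp

lemma alpha_pos {n : ℕ} (h : 0 < n) : 0 < binaryDigitSum n := by
  induction n using Nat.strong_induction_on with
  | _ n ih =>
    rcases Nat.even_or_odd n with ⟨m, hm⟩ | ⟨m, hm⟩
    · have hm' : 0 < m := by omega
      have : n = 2 * m := by omega
      rw [this, alpha_two_mul m hm']
      exact ih m (by omega) hm'
    · rw [hm, alpha_two_mul_add_one]
      omega

lemma alpha_succ_le (n : ℕ) : binaryDigitSum (n + 1) ≤ binaryDigitSum n + 1 := by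
  induction n using Nat.strong_induction_on with
  | _ n ih =>
    rcases Nat.even_or_odd n with ⟨m, hm⟩ | ⟨m, hm⟩
    · rcases Nat.eq_zero_or_pos m with rfl | hm'
      · simp [show n = 0 by omega]
        simp [binaryDigitSum]
      · have h1 : n = 2 * m := by omega
        have h2 : n + 1 = 2 * m + 1 := by omega
        rw [h2, h1, alpha_two_mul_add_one, alpha_two_mul m hm']
    · have h2 : n + 1 = 2 * (m + 1) := by omega
      rw [h2, hm, alpha_two_mul (m + 1) (by omega), alpha_two_mul_add_one]
      have := ih m (by omega)
      omega

lemma digits_len_le {t r : ℕ} (hr : r < 2 ^ t) : (Nat.digits 2 r).length ≤ t := by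
  rcases Nat.eq_zero_or_pos r with rfl | hr'
  · simp
  · have h := Nat.base_pow_length_digits_le 2 r (by norm_num) (by omega)
    by_contra hc
    push_neg at hc
    have : 2 ^ (t + 1) ≤ 2 ^ (Nat.digits 2 r).length := Nat.pow_le_pow_right (by norm_num) hc
    have : (2:ℕ) ^ (t+1) ≤ 2 * r := le_trans this h
    rw [pow_succ] at this
    omega

lemma alpha_mul_pow_add (a t r : ℕ) (hr : r < 2 ^ t) :
    binaryDigitSum (2 ^ t * a + r) = binaryDigitSum a + binaryDigitSum r := by
  rcases Nat.eq_zero_or_pos a with rfl | ha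
  · simp [binaryDigitSum, add_comm]
  · have hlen : (Nat.digits 2 r).length ≤ t := digits_len_le hr
    have key := Nat.digits_append_zeroes_append_digits
      (b := 2) (k := t - (Nat.digits 2 r).length) (m := a) (n := r) (by norm_num) ha
    rw [show (Nat.digits 2 r).length + (t - (Nat.digits 2 r).length) = t by omega] at key
    unfold binaryDigitSum
    rw [add_comm (2 ^ t * a) r, ← key]
    simp [List.sum_append, add_comm]

lemma alpha_mul_pow (a t : ℕ) : binaryDigitSum (2 ^ t * a) = binaryDigitSum a := by
  have := alpha_mul_pow_add a t 0 (Nat.pow_pos (by norm_num : 0 < 2))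
  simpa [binaryDigitSum] using this

lemma alpha_pred (B : ℕ) (hB : 0 < B) :
    binaryDigitSum B ≤ binaryDigitSum (B - 1) + 1 := by
  have := alpha_succ_le (B - 1)
  rw [show B - 1 + 1 = B by omega] at this
  exact this

lemma kummer {n k : ℕ} (h : k ≤ n) :
    padicValNat 2 (Nat.choose n k) =
      binaryDigitSum k + binaryDigitSum (n - k) - binaryDigitSum n := by
  have := @sub_one_mul_padicValNat_choose_eq_sub_sum_digits 2 k n ⟨Nat.prime_two⟩ h
  simpa [binaryDigitSum] using this

end Stmt5Aux

open Stmt5Aux in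
theorem stmt5 (t B : ℕ) (ht : 0 < t) (hB : 2 ≤ B) (j : ℕ)
    (h1 : (B - 2) * 2 ^ t < j) (h2 : j < (B + 1) * 2 ^ t) :
    (j = (B - 1) * 2 ^ t ∨ j = B * 2 ^ t →
      padicValNat 2 (Nat.choose ((2 * B - 1) * 2 ^ t) j) = binaryDigitSum B - 1) ∧
    (j ≠ (B - 1) * 2 ^ t ∧ j ≠ B * 2 ^ t →
      padicValNat 2 (Nat.choose ((2 * B - 1) * 2 ^ t) j) > binaryDigitSum B - 1) := by
  have h2t : 0 < 2 ^ t := Nat.pow_pos (by norm_num : 0 < 2)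
  set n := (2 * B - 1) * 2 ^ t with hn
  have hjn : j ≤ n := by
    have : (B + 1) * 2 ^ t ≤ (2 * B - 1) * 2 ^ t := by
      apply Nat.mul_le_mul_right; omega
    omega
  -- digit sum of n
  have halphan : binaryDigitSum n = binaryDigitSum (B - 1) + 1 := by
    rw [hn, mul_comm, alpha_mul_pow]
    have : 2 * B - 1 = 2 * (B - 1) + 1 := by omega
    rw [this, alpha_two_mul_add_one]
  have hkum := kummer hjn
  have hαB : 0 < binaryDigitSum B := alpha_pos (by omega)
  have hαB1 : 0 < binaryDigitSum (B - 1) := alpha_pos (by omega)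
  constructor
  · rintro (rfl | rfl)
    · have hsub : n - (B - 1) * 2 ^ t = 2 ^ t * B := by
        rw [hn]; rw [← Nat.sub_mul]
        rw [show 2 * B - 1 - (B - 1) = B by omega]; ring
      rw [hkum, hsub, alpha_mul_pow, halphan, mul_comm, alpha_mul_pow]
      omega
    · have hsub : n - B * 2 ^ t = 2 ^ t * (B - 1) := by
        rw [hn]; rw [← Nat.sub_mul]
        rw [show 2 * B - 1 - B = B - 1 by omega]; ring
      rw [hkum, hsub, alpha_mul_pow, halphan, mul_comm, alpha_mul_pow]
      omega
  · rintro ⟨hne1, hne2⟩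
    -- split structure lemmas
    have hsplit0 : (B - 2) * 2 ^ t = 2 ^ t * (B - 2) := mul_comm _ _
    have hsplit1 : (B - 1) * 2 ^ t = 2 ^ t * (B - 1) := mul_comm _ _
    have hsplit1' : 2 ^ t * (B - 2) + 2 ^ t = 2 ^ t * (B - 1) := by
      rw [← Nat.mul_succ]; congr 1; omega
    have hsplit2 : B * 2 ^ t = 2 ^ t * B := mul_comm _ _
    have hsplit2' : 2 ^ t * (B - 1) + 2 ^ t = 2 ^ t * B := by
      rw [← Nat.mul_succ]; congr 1; omega
    have hsplit3 : (B + 1) * 2 ^ t = 2 ^ t * B + 2 ^ t := by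
      rw [mul_comm, Nat.mul_succ]
    have hn1 : n = 2 ^ t * (B - 2) + 2 ^ t * B + 2 ^ t := by
      rw [hn, show 2 * B - 1 = (B - 2) + B + 1 by omega, Nat.add_mul, Nat.add_mul, one_mul]
      ring_nf
    have hn2 : n = 2 ^ t * (B - 1) + 2 ^ t * (B - 1) + 2 ^ t := by
      rw [hn, show 2 * B - 1 = (B - 1) + (B - 1) + 1 by omega, Nat.add_mul, Nat.add_mul, one_mul]
      ring_nf
    -- decompose j as 2^t * a + r with a ∈ {B-2, B-1, B}, and compute n - j
    obtain ⟨a, b, r, hj, hnj, hr, hab⟩ :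
        ∃ a b r, j = 2 ^ t * a + r ∧ n - j = 2 ^ t * b + (2 ^ t - r) ∧
          (0 < r ∧ r < 2 ^ t) ∧
          ((a = B - 2 ∧ b = B) ∨ (a = B - 1 ∧ b = B - 1) ∨ (a = B ∧ b = B - 2)) := by
      by_cases hc1 : j < (B - 1) * 2 ^ t
      · exact ⟨B - 2, B, j - 2 ^ t * (B - 2), by omega, by omega, by omega, Or.inl ⟨rfl, rfl⟩⟩
      · by_cases hc2 : j < B * 2 ^ t
        · refine ⟨B - 1, B - 1, j - 2 ^ t * (B - 1), by omega, by omega, ⟨?_, by omega⟩,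
            Or.inr (Or.inl ⟨rfl, rfl⟩)⟩
          omega
        · refine ⟨B, B - 2, j - 2 ^ t * B, by omega, by omega, ⟨?_, by omega⟩,
            Or.inr (Or.inr ⟨rfl, rfl⟩)⟩
          omega
    have hαj : binaryDigitSum j = binaryDigitSum a + binaryDigitSum r := by
      rw [hj, alpha_mul_pow_add _ _ _ hr.2]
    have hαnj : binaryDigitSum (n - j) = binaryDigitSum b + binaryDigitSum (2 ^ t - r) := by
      rw [hnj, alpha_mul_pow_add _ _ _ (by omega)]
    have hαr : 0 < binaryDigitSum r := alpha_pos hr.1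
    have hαs : 0 < binaryDigitSum (2 ^ t - r) := alpha_pos (by omega)
    have hp1 : binaryDigitSum B ≤ binaryDigitSum (B - 1) + 1 := alpha_pred B (by omega)
    have hp2 : binaryDigitSum (B - 1) ≤ binaryDigitSum (B - 2) + 1 := by
      have := alpha_pred (B - 1) (by omega)
      rw [show B - 1 - 1 = B - 2 by omega] at this
      exact this
    rw [hkum, hαj, hαnj, halphan]
    rcases hab with ⟨ha, hb⟩ | ⟨ha, hb⟩ | ⟨ha, hb⟩ <;> subst ha <;> subst hb <;> omega
end

section
/- For every integer ℓ with 1 < ℓ < 2^{e+1}, the 2-adic valuation of C(2^{e+1}, ℓ) - 2·C(2^e, ℓ) equals 2e + 1 - ⌊log₂(ℓ-1)⌋ - ν(ℓ), where C(2^e, ℓ) is interpreted as 0 when ℓ > 2^e. -/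
open Finset

private lemma pv_eq {a M : ℕ} (h1 : 2 ^ M ∣ a) (h2 : ¬ 2 ^ (M + 1) ∣ a) :
    padicValNat 2 a = M := by
  have ha : a ≠ 0 := by rintro rfl; exact h2 (dvd_zero _)
  have hA := (padicValNat_dvd_iff M a).mp h1
  have hB : ¬ (a = 0 ∨ M + 1 ≤ padicValNat 2 a) := fun h => h2 ((padicValNat_dvd_iff _ a).mpr h)
  push_neg at hB
  omega

private lemma pv_dvd {a c : ℕ} (h : c ≤ padicValNat 2 a) : 2 ^ c ∣ a :=
  (padicValNat_dvd_iff c a).mpr (Or.inr h)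

private lemma pv_not_dvd {a : ℕ} (ha : a ≠ 0) : ¬ 2 ^ (padicValNat 2 a + 1) ∣ a := by
  intro h
  rcases (padicValNat_dvd_iff _ a).mp h with h' | h'
  · exact ha h'
  · omega

private lemma pv_le {a c : ℕ} (ha : a ≠ 0) (h : 2 ^ c ∣ a) : c ≤ padicValNat 2 a := by
  rcases (padicValNat_dvd_iff _ a).mp h with h' | h'
  · exact absurd h' ha
  · exact h'

private lemma pv_choose_pow (e j : ℕ) (hj : j ≠ 0) (hje : j ≤ 2 ^ e) :
    padicValNat 2 ((2 ^ e).choose j) + padicValNat 2 j = e := by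
  have h := Nat.Prime.emultiplicity_choose_prime_pow_add_emultiplicity Nat.prime_two hje hj
  rw [← padicValNat_eq_emultiplicity (Nat.choose_pos hje).ne',
    ← padicValNat_eq_emultiplicity hj] at h
  exact_mod_cast h

private lemma pv_add {a b M : ℕ} (h1 : 2 ^ M ∣ a) (h2 : ¬ 2 ^ (M + 1) ∣ a)
    (h3 : 2 ^ (M + 1) ∣ b) : padicValNat 2 (a + b) = M := by
  refine pv_eq (dvd_add h1 (dvd_trans (pow_dvd_pow 2 (Nat.le_succ M)) h3)) ?_
  intro h
  have : 2 ^ (M + 1) ∣ a := by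
    have := Nat.dvd_sub h h3
    simpa using this
  exact h2 this

theorem stmt6 (e : ℕ) (he : 0 < e) (ℓ : ℕ) (h1 : 1 < ℓ) (h2 : ℓ < 2 ^ (e + 1)) :
    (padicValInt 2 ((Nat.choose (2 ^ (e + 1)) ℓ : ℤ) - 2 * Nat.choose (2 ^ e) ℓ) : ℤ) =
      2 * e + 1 - Nat.log 2 (ℓ - 1) - padicValNat 2 ℓ := by
  by_cases hcase : 2 ^ e < ℓ
  · -- Case A : choose (2^e) ℓ = 0
    have hc0 : (2 ^ e).choose ℓ = 0 := Nat.choose_eq_zero_of_lt hcase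
    have hC := pv_choose_pow (e + 1) ℓ (by omega) (le_of_lt h2)
    have hte : Nat.log 2 (ℓ - 1) = e := Nat.log_eq_of_pow_le_of_lt_pow (by omega) (by omega)
    have hvle : padicValNat 2 ℓ ≤ e + 1 := by omega
    rw [hc0]
    simp only [Nat.cast_zero, mul_zero, sub_zero, padicValInt.of_nat]
    rw [hte]
    omega
  · push_neg at hcase
    -- Vandermonde
    have hvdm : (2 ^ (e + 1)).choose ℓ =
        (∑ j ∈ Ioo 0 ℓ, (2 ^ e).choose j * (2 ^ e).choose (ℓ - j)) + 2 * (2 ^ e).choose ℓ := by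
      have hpow : (2 : ℕ) ^ (e + 1) = 2 ^ e + 2 ^ e := by rw [pow_succ]; ring
      rw [hpow, Nat.add_choose_eq, Finset.Nat.sum_antidiagonal_eq_sum_range_succ_mk]
      rw [Finset.sum_range_succ]
      have hins : Finset.range ℓ = insert 0 (Ioo 0 ℓ) := by
        ext x; simp only [Finset.mem_range, Finset.mem_insert, Finset.mem_Ioo]; omega
      rw [hins, Finset.sum_insert (by simp)]
      simp only [Nat.choose_zero_right, Nat.sub_zero, Nat.sub_self, one_mul, mul_one]
      ring
    have hterm : ∀ j, 0 < j → j < ℓ →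
        padicValNat 2 ((2 ^ e).choose j * (2 ^ e).choose (ℓ - j))
          + (padicValNat 2 j + padicValNat 2 (ℓ - j)) = 2 * e
        ∧ (2 ^ e).choose j * (2 ^ e).choose (ℓ - j) ≠ 0 := by
      intro j hj0 hjl
      have hjm : j ≤ 2 ^ e := le_trans (le_of_lt hjl) hcase
      have hlm : ℓ - j ≤ 2 ^ e := le_trans (by omega) hcase
      have hne1 : (2 ^ e).choose j ≠ 0 := (Nat.choose_pos hjm).ne'
      have hne2 : (2 ^ e).choose (ℓ - j) ≠ 0 := (Nat.choose_pos hlm).ne'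
      have hmul := padicValNat.mul (p := 2) hne1 hne2
      have e1 := pv_choose_pow e j (by omega) hjm
      have e2 := pv_choose_pow e (ℓ - j) (by omega) hlm
      exact ⟨by rw [hmul]; omega, mul_ne_zero hne1 hne2⟩
    -- pairing
    have hpair : ∑ j ∈ (Ioo 0 ℓ).filter (fun j => ℓ < 2 * j),
          (2 ^ e).choose j * (2 ^ e).choose (ℓ - j)
        = ∑ j ∈ (Ioo 0 ℓ).filter (fun j => 2 * j < ℓ),
          (2 ^ e).choose j * (2 ^ e).choose (ℓ - j) := by
      refine Finset.sum_nbij' (fun j => ℓ - j) (fun j => ℓ - j) ?_ ?_ ?_ ?_ ?_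
      · intro a ha; simp only [Finset.mem_filter, Finset.mem_Ioo] at ha ⊢; omega
      · intro a ha; simp only [Finset.mem_filter, Finset.mem_Ioo] at ha ⊢; omega
      · intro a ha; simp only [Finset.mem_filter, Finset.mem_Ioo] at ha
        show ℓ - (ℓ - a) = a; omega
      · intro a ha; simp only [Finset.mem_filter, Finset.mem_Ioo] at ha
        show ℓ - (ℓ - a) = a; omega
      · intro a ha; simp only [Finset.mem_filter, Finset.mem_Ioo] at ha
        have hsub : ℓ - (ℓ - a) = a := by omega
        rw [hsub, mul_comm]
    have hsplit : ∑ j ∈ Ioo 0 ℓ, (2 ^ e).choose j * (2 ^ e).choose (ℓ - j)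
        = 2 * (∑ j ∈ (Ioo 0 ℓ).filter (fun j => 2 * j < ℓ),
            (2 ^ e).choose j * (2 ^ e).choose (ℓ - j))
          + ∑ j ∈ (Ioo 0 ℓ).filter (fun j => 2 * j = ℓ),
            (2 ^ e).choose j * (2 ^ e).choose (ℓ - j) := by
      classical
      have hA := Finset.sum_filter_add_sum_filter_not (Ioo 0 ℓ) (fun j => 2 * j < ℓ)
        (fun j => (2 ^ e).choose j * (2 ^ e).choose (ℓ - j))
      have hB := Finset.sum_filter_add_sum_filter_not
        ((Ioo 0 ℓ).filter (fun j => ¬ 2 * j < ℓ)) (fun j => 2 * j = ℓ)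
        (fun j => (2 ^ e).choose j * (2 ^ e).choose (ℓ - j))
      rw [Finset.filter_filter, Finset.filter_filter] at hB
      have hs1 : (Ioo 0 ℓ).filter (fun j => ¬ 2 * j < ℓ ∧ 2 * j = ℓ)
          = (Ioo 0 ℓ).filter (fun j => 2 * j = ℓ) := by
        ext x; simp only [Finset.mem_filter, Finset.mem_Ioo]; omega
      have hs2 : (Ioo 0 ℓ).filter (fun j => ¬ 2 * j < ℓ ∧ ¬ 2 * j = ℓ)
          = (Ioo 0 ℓ).filter (fun j => ℓ < 2 * j) := by
        ext x; simp only [Finset.mem_filter, Finset.mem_Ioo]; omega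
      rw [hs1, hs2, hpair] at hB
      omega
    have hl0 : ℓ ≠ 0 := by omega
    have htlt : Nat.log 2 (ℓ - 1) < e := Nat.log_lt_of_lt_pow (by omega) (by omega)
    have hvdvd : 2 ^ padicValNat 2 ℓ ∣ ℓ := pow_padicValNat_dvd
    have hlnot : ¬ 2 ^ (padicValNat 2 ℓ + 1) ∣ ℓ := pv_not_dvd hl0
    have hnusub : ∀ j, 0 < j → j < ℓ → padicValNat 2 j < padicValNat 2 ℓ →
        padicValNat 2 (ℓ - j) = padicValNat 2 j := by
      intro j hj0 hjl hlt
      apply pv_eq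
      · exact Nat.dvd_sub (dvd_trans (pow_dvd_pow 2 (by omega)) hvdvd) (pv_dvd le_rfl)
      · intro h
        have hd : 2 ^ (padicValNat 2 j + 1) ∣ ℓ := dvd_trans (pow_dvd_pow 2 (by omega)) hvdvd
        have hj' : 2 ^ (padicValNat 2 j + 1) ∣ j := by
          have := Nat.dvd_sub hd h
          rwa [Nat.sub_sub_self (le_of_lt hjl)] at this
        exact pv_not_dvd (by omega) hj'
    -- main valuation computation
    have hDval : padicValNat 2 (∑ j ∈ Ioo 0 ℓ, (2 ^ e).choose j * (2 ^ e).choose (ℓ - j))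
          + Nat.log 2 (ℓ - 1) + padicValNat 2 ℓ = 2 * e + 1 := by
      by_cases hP : ℓ = 2 ^ padicValNat 2 ℓ
      · -- ℓ is a power of two
        have hv1 : 1 ≤ padicValNat 2 ℓ := by
          rcases Nat.eq_zero_or_pos (padicValNat 2 ℓ) with h | h
          · rw [h, pow_zero] at hP; omega
          · exact h
        have h2v : 2 ^ (padicValNat 2 ℓ - 1) * 2 = 2 ^ padicValNat 2 ℓ := by
          rw [← pow_succ]; congr 1; omega
        have hpos : 1 ≤ 2 ^ (padicValNat 2 ℓ - 1) := Nat.one_le_two_pow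
        have hvE : padicValNat 2 ℓ ≤ e := by
          have h' := padicValNat_le_nat_log (p := 2) ℓ
          have hlog : Nat.log 2 ℓ ≤ e := by
            have := Nat.log_mono_right (b := 2) hcase
            rwa [Nat.log_pow one_lt_two] at this
          omega
        have htv : Nat.log 2 (ℓ - 1) = padicValNat 2 ℓ - 1 := by
          apply Nat.log_eq_of_pow_le_of_lt_pow (by omega)
          rw [show padicValNat 2 ℓ - 1 + 1 = padicValNat 2 ℓ from by omega]
          omega
        have hmid : (Ioo 0 ℓ).filter (fun j => 2 * j = ℓ) = {2 ^ (padicValNat 2 ℓ - 1)} := by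
          ext x
          simp only [Finset.mem_filter, Finset.mem_Ioo, Finset.mem_singleton]
          omega
        obtain ⟨hA, hB⟩ := hterm (2 ^ (padicValNat 2 ℓ - 1)) (by omega) (by omega)
        have hsub : ℓ - 2 ^ (padicValNat 2 ℓ - 1) = 2 ^ (padicValNat 2 ℓ - 1) := by omega
        have pvj0' : padicValNat 2 (2 ^ (padicValNat 2 ℓ - 1)) = padicValNat 2 ℓ - 1 :=
          padicValNat.prime_pow _
        have hauxB1 : padicValNat 2 (ℓ - 2 ^ (padicValNat 2 ℓ - 1)) = padicValNat 2 ℓ - 1 := by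
          rw [hsub]; exact padicValNat.prime_pow _
        have hSdvd : 2 ^ (2 * e - 2 * padicValNat 2 ℓ + 2) ∣
            ∑ j ∈ (Ioo 0 ℓ).filter (fun j => 2 * j < ℓ),
              (2 ^ e).choose j * (2 ^ e).choose (ℓ - j) := by
          apply Finset.dvd_sum
          intro j hj
          rw [Finset.mem_filter, Finset.mem_Ioo] at hj
          obtain ⟨⟨hj0, hjl⟩, hjlt⟩ := hj
          have hlog2 : Nat.log 2 j < padicValNat 2 ℓ - 1 :=
            Nat.log_lt_of_lt_pow (by omega) (by omega)
          have hple := padicValNat_le_nat_log (p := 2) j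
          have hsub2 := hnusub j hj0 hjl (by omega)
          obtain ⟨hA', hB'⟩ := hterm j hj0 hjl
          exact pv_dvd (by omega)
        have hSdvd2 : 2 ^ (2 * e - 2 * padicValNat 2 ℓ + 2 + 1) ∣
            2 * ∑ j ∈ (Ioo 0 ℓ).filter (fun j => 2 * j < ℓ),
              (2 ^ e).choose j * (2 ^ e).choose (ℓ - j) := by
          rw [show (2:ℕ) ^ (2 * e - 2 * padicValNat 2 ℓ + 2 + 1)
              = 2 * 2 ^ (2 * e - 2 * padicValNat 2 ℓ + 2) from by ring]
          exact mul_dvd_mul_left 2 hSdvd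
        have hfj0 : padicValNat 2 ((2 ^ e).choose (2 ^ (padicValNat 2 ℓ - 1)) *
            (2 ^ e).choose (ℓ - 2 ^ (padicValNat 2 ℓ - 1)))
            = 2 * e - 2 * padicValNat 2 ℓ + 2 := by omega
        have hfinal : padicValNat 2 (2 * (∑ j ∈ (Ioo 0 ℓ).filter (fun j => 2 * j < ℓ),
            (2 ^ e).choose j * (2 ^ e).choose (ℓ - j))
            + ∑ j ∈ (Ioo 0 ℓ).filter (fun j => 2 * j = ℓ),
              (2 ^ e).choose j * (2 ^ e).choose (ℓ - j))
            = 2 * e - 2 * padicValNat 2 ℓ + 2 := by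
          rw [hmid, Finset.sum_singleton, add_comm]
          exact pv_add (pv_dvd (le_of_eq hfj0.symm)) (hfj0 ▸ pv_not_dvd hB) hSdvd2
        rw [hsplit, hfinal]
        omega
      · -- ℓ is not a power of two
        have hnopow : ∀ s, ℓ ≠ 2 ^ s := by
          intro s hs
          apply hP
          have hvs : padicValNat 2 ℓ = s := by rw [hs, padicValNat.prime_pow]
          rw [hvs]; exact hs
        have hlt1 : 2 ^ Nat.log 2 (ℓ - 1) ≤ ℓ - 1 := Nat.pow_log_le_self 2 (by omega)
        have hlt2 : ℓ - 1 < 2 ^ (Nat.log 2 (ℓ - 1) + 1) := Nat.lt_pow_succ_log_self one_lt_two _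
        have h2t1 : 2 ^ (Nat.log 2 (ℓ - 1) + 1) = 2 * 2 ^ Nat.log 2 (ℓ - 1) := by ring
        have hllt : ℓ < 2 ^ (Nat.log 2 (ℓ - 1) + 1) := by
          have := hnopow (Nat.log 2 (ℓ - 1) + 1); omega
        have huniq : ∀ x, 0 < x → x < ℓ → 2 ^ Nat.log 2 (ℓ - 1) ∣ x →
            x = 2 ^ Nat.log 2 (ℓ - 1) := by
          intro x hx0 hxl hdvd
          obtain ⟨c, rfl⟩ := hdvd
          have hc0 : c ≠ 0 := by rintro rfl; simp at hx0
          have hlt : 2 ^ Nat.log 2 (ℓ - 1) * c < 2 ^ Nat.log 2 (ℓ - 1) * 2 :=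
            lt_of_lt_of_le hxl (by omega)
          have hc2 := Nat.lt_of_mul_lt_mul_left hlt
          have hc1 : c = 1 := by omega
          rw [hc1, mul_one]
        have hge : 2 ^ (padicValNat 2 ℓ + 1) ≤ ℓ := by
          obtain ⟨c, hc⟩ := hvdvd
          have hc0 : c ≠ 0 := by rintro rfl; simp at hc; omega
          have hc1 : c ≠ 1 := by rintro rfl; rw [mul_one] at hc; exact hP hc
          calc 2 ^ (padicValNat 2 ℓ + 1) = 2 ^ padicValNat 2 ℓ * 2 := by ring
          _ ≤ 2 ^ padicValNat 2 ℓ * c := Nat.mul_le_mul_left _ (by omega)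
          _ = ℓ := hc.symm
        have hvt : padicValNat 2 ℓ + 1 ≤ Nat.log 2 (ℓ - 1) := by
          have h' := hnopow (padicValNat 2 ℓ + 1)
          exact (Nat.le_log_iff_pow_le one_lt_two (by omega)).mpr (by omega)
        have hj0lt : 2 ^ Nat.log 2 (ℓ - 1) < ℓ := by omega
        have pvj0 : padicValNat 2 (2 ^ Nat.log 2 (ℓ - 1)) = Nat.log 2 (ℓ - 1) :=
          padicValNat.prime_pow _
        have pvj1 : padicValNat 2 (ℓ - 2 ^ Nat.log 2 (ℓ - 1)) = padicValNat 2 ℓ := by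
          apply pv_eq
          · exact Nat.dvd_sub hvdvd (pow_dvd_pow 2 (by omega))
          · intro h
            apply hlnot
            have hd2 : 2 ^ (padicValNat 2 ℓ + 1) ∣ 2 ^ Nat.log 2 (ℓ - 1) :=
              pow_dvd_pow 2 (by omega)
            have := Nat.dvd_add h hd2
            rwa [Nat.sub_add_cancel (le_of_lt hj0lt)] at this
        have hj1sub : ℓ - (ℓ - 2 ^ Nat.log 2 (ℓ - 1)) = 2 ^ Nat.log 2 (ℓ - 1) := by omega
        obtain ⟨hA1, hB1⟩ := hterm (ℓ - 2 ^ Nat.log 2 (ℓ - 1)) (by omega) (by omega)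
        have hj1memS : ℓ - 2 ^ Nat.log 2 (ℓ - 1) ∈ (Ioo 0 ℓ).filter (fun j => 2 * j < ℓ) := by
          simp only [Finset.mem_filter, Finset.mem_Ioo]
          omega
        have haux : padicValNat 2 (ℓ - (ℓ - 2 ^ Nat.log 2 (ℓ - 1))) = Nat.log 2 (ℓ - 1) := by
          rw [hj1sub]; exact pvj0
        have hrest : ∀ j ∈ ((Ioo 0 ℓ).filter (fun j => 2 * j < ℓ)).erase
            (ℓ - 2 ^ Nat.log 2 (ℓ - 1)),
            2 ^ (2 * e - Nat.log 2 (ℓ - 1) - padicValNat 2 ℓ + 1) ∣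
              (2 ^ e).choose j * (2 ^ e).choose (ℓ - j) := by
          intro j hj
          rw [Finset.mem_erase, Finset.mem_filter, Finset.mem_Ioo] at hj
          obtain ⟨hne, ⟨⟨hj0', hjl⟩, hjlt⟩⟩ := hj
          obtain ⟨hA', hB'⟩ := hterm j hj0' hjl
          apply pv_dvd
          have hkey : padicValNat 2 j + padicValNat 2 (ℓ - j) + 1
              ≤ Nat.log 2 (ℓ - 1) + padicValNat 2 ℓ := by
            by_cases hc : padicValNat 2 j < padicValNat 2 ℓ
            · have := hnusub j hj0' hjl hc; omega
            · push_neg at hc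
              have hdj : 2 ^ padicValNat 2 ℓ ∣ j := dvd_trans (pow_dvd_pow 2 hc) (pv_dvd le_rfl)
              have hdlj : padicValNat 2 ℓ ≤ padicValNat 2 (ℓ - j) :=
                pv_le (by omega) (Nat.dvd_sub hvdvd hdj)
              have hnb : ¬ (padicValNat 2 ℓ + 1 ≤ padicValNat 2 j
                  ∧ padicValNat 2 ℓ + 1 ≤ padicValNat 2 (ℓ - j)) := by
                rintro ⟨ha, hb⟩
                apply hlnot
                have hx1 : 2 ^ (padicValNat 2 ℓ + 1) ∣ j :=
                  (pow_dvd_pow 2 ha).trans (pv_dvd le_rfl)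
                have hx2 : 2 ^ (padicValNat 2 ℓ + 1) ∣ ℓ - j :=
                  (pow_dvd_pow 2 hb).trans (pv_dvd le_rfl)
                have := Nat.dvd_add hx2 hx1
                rwa [Nat.sub_add_cancel (le_of_lt hjl)] at this
              have hbj : padicValNat 2 j ≤ Nat.log 2 (ℓ - 1) :=
                le_trans (padicValNat_le_nat_log j) (Nat.log_mono_right (by omega))
              have hblj : padicValNat 2 (ℓ - j) ≤ Nat.log 2 (ℓ - 1) :=
                le_trans (padicValNat_le_nat_log (ℓ - j)) (Nat.log_mono_right (by omega))
              by_contra hcon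
              have hdisj : padicValNat 2 j = Nat.log 2 (ℓ - 1)
                  ∨ padicValNat 2 (ℓ - j) = Nat.log 2 (ℓ - 1) := by omega
              rcases hdisj with h | h
              · have := huniq j hj0' hjl (h ▸ pv_dvd le_rfl)
                omega
              · have := huniq (ℓ - j) (by omega) (by omega) (h ▸ pv_dvd le_rfl)
                omega
          omega
        have hfj1 : padicValNat 2 ((2 ^ e).choose (ℓ - 2 ^ Nat.log 2 (ℓ - 1)) *
            (2 ^ e).choose (ℓ - (ℓ - 2 ^ Nat.log 2 (ℓ - 1))))
            = 2 * e - Nat.log 2 (ℓ - 1) - padicValNat 2 ℓ := by omega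
        have hS : padicValNat 2 (∑ j ∈ (Ioo 0 ℓ).filter (fun j => 2 * j < ℓ),
            (2 ^ e).choose j * (2 ^ e).choose (ℓ - j))
            = 2 * e - Nat.log 2 (ℓ - 1) - padicValNat 2 ℓ := by
          rw [← Finset.add_sum_erase _ _ hj1memS]
          exact pv_add (pv_dvd (le_of_eq hfj1.symm)) (hfj1 ▸ pv_not_dvd hB1)
            (Finset.dvd_sum hrest)
        have hmiddvd : 2 ^ (2 * e - Nat.log 2 (ℓ - 1) - padicValNat 2 ℓ + 1 + 1) ∣
            ∑ j ∈ (Ioo 0 ℓ).filter (fun j => 2 * j = ℓ),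
              (2 ^ e).choose j * (2 ^ e).choose (ℓ - j) := by
          apply Finset.dvd_sum
          intro j hj
          rw [Finset.mem_filter, Finset.mem_Ioo] at hj
          obtain ⟨⟨hj0', hjl⟩, hjeq⟩ := hj
          obtain ⟨hA', hB'⟩ := hterm j hj0' hjl
          have hlj : padicValNat 2 (ℓ - j) = padicValNat 2 j := by
            rw [show ℓ - j = j from by omega]
          have hdl : 2 ^ (padicValNat 2 j + 1) ∣ ℓ := by
            rw [← hjeq, show (2:ℕ) ^ (padicValNat 2 j + 1)
              = 2 * 2 ^ padicValNat 2 j from by ring]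
            exact mul_dvd_mul_left 2 (pv_dvd le_rfl)
          have hle := pv_le hl0 hdl
          apply pv_dvd
          omega
        have hSne : (∑ j ∈ (Ioo 0 ℓ).filter (fun j => 2 * j < ℓ),
            (2 ^ e).choose j * (2 ^ e).choose (ℓ - j)) ≠ 0 := by
          intro h0
          rw [h0] at hS
          simp only [padicValNat.zero] at hS
          omega
        have hfinal : padicValNat 2 (2 * (∑ j ∈ (Ioo 0 ℓ).filter (fun j => 2 * j < ℓ),
            (2 ^ e).choose j * (2 ^ e).choose (ℓ - j))
            + ∑ j ∈ (Ioo 0 ℓ).filter (fun j => 2 * j = ℓ),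
              (2 ^ e).choose j * (2 ^ e).choose (ℓ - j))
            = 2 * e - Nat.log 2 (ℓ - 1) - padicValNat 2 ℓ + 1 := by
          apply pv_add
          · rw [show (2:ℕ) ^ (2 * e - Nat.log 2 (ℓ - 1) - padicValNat 2 ℓ + 1)
              = 2 * 2 ^ (2 * e - Nat.log 2 (ℓ - 1) - padicValNat 2 ℓ) from by ring]
            exact mul_dvd_mul_left 2 (pv_dvd (le_of_eq hS.symm))
          · intro h
            rw [show (2:ℕ) ^ (2 * e - Nat.log 2 (ℓ - 1) - padicValNat 2 ℓ + 1 + 1)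
              = 2 * 2 ^ (2 * e - Nat.log 2 (ℓ - 1) - padicValNat 2 ℓ + 1) from by ring] at h
            have h' := (Nat.mul_dvd_mul_iff_left (show 0 < 2 by norm_num)).mp h
            have := pv_le hSne h'
            omega
          · exact hmiddvd
        rw [hsplit, hfinal]
        omega
    -- final assembly
    have hcast : ((Nat.choose (2 ^ (e + 1)) ℓ : ℤ) - 2 * Nat.choose (2 ^ e) ℓ)
        = ((∑ j ∈ Ioo 0 ℓ, (2 ^ e).choose j * (2 ^ e).choose (ℓ - j) : ℕ) : ℤ) := by
      rw [hvdm]; push_cast; ring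
    rw [hcast, padicValInt.of_nat]
    omega
end

section
/- For integers e, t with 2 ≤ t ≤ e, the congruence -C(2^e, 2^t) ≡ 2^{e-t} (mod 2^{2(e-t)+1}) holds; in particular ν(C(2^e, 2^t)) = e - t. -/
private lemma aux_unit {k m : ℕ} (hm : Odd m) : IsUnit (m : ZMod (2 ^ k)) := by
  rw [ZMod.isUnit_iff_coprime]
  exact Nat.Coprime.pow_right k (Odd.coprime_two_right hm)

private lemma aux_cong (e t : ℕ) (ht : 1 ≤ t) (h2 : t ≤ e) :
    ∀ j : ℕ, j < 2 ^ t →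
      ((Nat.choose (2 ^ e - 1) j : ZMod (2 ^ (e - t + 1)))) = (-1) ^ j := by
  intro j
  induction j with
  | zero => intro _; simp
  | succ j ih =>
    intro hj
    have hj' : j < 2 ^ t := Nat.lt_of_succ_lt hj
    have IH := ih hj'
    set a := padicValNat 2 (j + 1) with ha
    set m := (j + 1) / 2 ^ a with hm
    have hfact : j + 1 = 2 ^ a * m := by
      rw [hm, Nat.mul_div_cancel' (pow_padicValNat_dvd)]
    have hmodd : Odd m := by
      rcases Nat.even_or_odd m with he | ho
      · exfalso
        obtain ⟨c, hc⟩ := he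
        have hdd : 2 ^ (a + 1) ∣ j + 1 := by
          rw [hfact, hc, pow_succ]
          exact ⟨c, by ring⟩
        have := (padicValNat_dvd_iff_le (p := 2) (n := a + 1) (a := j + 1) (by omega)).mp hdd
        omega
      · exact ho
    have hale : a < t := by
      by_contra hcon
      push_neg at hcon
      have h1 : 2 ^ t ≤ 2 ^ a := Nat.pow_le_pow_right (by norm_num) hcon
      have h2a : 2 ^ a ∣ j + 1 := ⟨m, hfact⟩
      have := Nat.le_of_dvd (Nat.succ_pos j) h2a
      omega
    have hid := Nat.choose_succ_right_eq (2 ^ e - 1) j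
    have hjle : j + 1 ≤ 2 ^ e := by
      have : 2 ^ t ≤ 2 ^ e := Nat.pow_le_pow_right (by norm_num) h2
      omega
    have hsub : (2 ^ e - 1 - j) = 2 ^ e - (j + 1) := by omega
    have hidZ : (Nat.choose (2 ^ e - 1) (j + 1) : ℤ) * (j + 1) =
        (Nat.choose (2 ^ e - 1) j : ℤ) * ((2 : ℤ) ^ e - (j + 1)) := by
      have hcast := congrArg (fun x : ℕ => (x : ℤ)) hid
      simp only [hsub] at hcast
      push_cast [Nat.cast_sub hjle] at hcast
      push_cast
      linarith [hcast]
    have hcancel : (Nat.choose (2 ^ e - 1) (j + 1) : ℤ) * m =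
        (Nat.choose (2 ^ e - 1) j : ℤ) * ((2 : ℤ) ^ (e - a) - m) := by
      have hea : (2 : ℤ) ^ e = 2 ^ a * 2 ^ (e - a) := by
        rw [← pow_add]
        congr 1
        omega
      have h2a : ((2 : ℤ) ^ a) ≠ 0 := by positivity
      have hfz : ((j : ℤ) + 1) = 2 ^ a * m := by
        have := congrArg (fun x : ℕ => (x : ℤ)) hfact
        push_cast at this
        linarith
      apply mul_left_cancel₀ h2a
      calc (2:ℤ) ^ a * ((Nat.choose (2 ^ e - 1) (j + 1) : ℤ) * m)
          = (Nat.choose (2 ^ e - 1) (j + 1) : ℤ) * ((2:ℤ) ^ a * m) := by ring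
        _ = (Nat.choose (2 ^ e - 1) (j + 1) : ℤ) * ((j : ℤ) + 1) := by rw [← hfz]
        _ = (Nat.choose (2 ^ e - 1) j : ℤ) * ((2 : ℤ) ^ e - (j + 1)) := hidZ
        _ = 2 ^ a * ((Nat.choose (2 ^ e - 1) j : ℤ) * ((2 : ℤ) ^ (e - a) - m)) := by
            rw [hea, hfz]
            ring
    have hz := congrArg (fun x : ℤ => (x : ZMod (2 ^ (e - t + 1)))) hcancel
    push_cast at hz
    have hzero : ((2 : ZMod (2 ^ (e - t + 1))) ^ (e - a)) = 0 := by
      have hdvd : (2 : ℕ) ^ (e - t + 1) ∣ 2 ^ (e - a) := pow_dvd_pow 2 (by omega)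
      have hz0 : ((2 ^ (e - a) : ℕ) : ZMod (2 ^ (e - t + 1))) = 0 :=
        (ZMod.natCast_eq_zero_iff _ _).mpr hdvd
      push_cast at hz0
      exact hz0
    rw [hzero, IH] at hz
    have hu : IsUnit ((m : ZMod (2 ^ (e - t + 1)))) := aux_unit hmodd
    have hfin : ((Nat.choose (2 ^ e - 1) (j + 1) : ZMod (2 ^ (e - t + 1))))
          * (m : ZMod (2 ^ (e - t + 1)))
        = (-1) ^ (j + 1) * (m : ZMod (2 ^ (e - t + 1))) := by
      rw [hz]
      ring
    exact hu.mul_right_cancel hfin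

theorem stmt7 (e t : ℕ) (h1 : 2 ≤ t) (h2 : t ≤ e) :
    (-(Nat.choose (2 ^ e) (2 ^ t) : ℤ)) ≡ 2 ^ (e - t) [ZMOD (2 ^ (2 * (e - t) + 1))] ∧
    padicValNat 2 (Nat.choose (2 ^ e) (2 ^ t)) = e - t := by
  set d := e - t with hd
  set A := Nat.choose (2 ^ e - 1) (2 ^ t - 1) with hA
  have ht1 : 1 ≤ t := by omega
  have h2t : 1 ≤ 2 ^ t := Nat.one_le_two_pow
  have hAcong : ((A : ZMod (2 ^ (d + 1)))) = -1 := by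
    have hc := aux_cong e t ht1 h2 (2 ^ t - 1) (by omega)
    rw [hA, hc]
    have hodd : Odd (2 ^ t - 1) := by
      rcases Nat.even_or_odd (2 ^ t - 1) with he | ho
      · exfalso
        have h2d : (2 : ℕ) ∣ 2 ^ t := dvd_pow_self 2 (by omega)
        obtain ⟨c, hcc⟩ := he
        obtain ⟨c', hc'⟩ := h2d
        omega
      · exact ho
    exact Odd.neg_one_pow hodd
  have hdvdA : ((2 : ℤ) ^ (d + 1)) ∣ (A : ℤ) + 1 := by
    have hz : (((A + 1 : ℕ)) : ZMod (2 ^ (d + 1))) = 0 := by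
      push_cast [hAcong]
      ring
    have hz2 := (ZMod.natCast_eq_zero_iff _ _).mp hz
    have := Int.natCast_dvd_natCast.mpr hz2
    push_cast at this
    exact this
  have hkey : Nat.choose (2 ^ e) (2 ^ t) = 2 ^ d * A := by
    have hid := Nat.add_one_mul_choose_eq (2 ^ e - 1) (2 ^ t - 1)
    have he1 : (2 ^ e - 1).succ = 2 ^ e := by
      have : 1 ≤ 2 ^ e := Nat.one_le_two_pow
      omega
    have he2 : (2 ^ t - 1).succ = 2 ^ t := by omega
    rw [Nat.succ_eq_add_one] at he1 he2
    rw [he1, he2] at hid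
    have hsplit : 2 ^ e = 2 ^ t * 2 ^ d := by
      rw [← pow_add]
      congr 1
      omega
    apply Nat.eq_of_mul_eq_mul_left (show 0 < 2 ^ t by positivity)
    calc 2 ^ t * Nat.choose (2 ^ e) (2 ^ t) = Nat.choose (2 ^ e) (2 ^ t) * 2 ^ t := by ring
      _ = 2 ^ e * A := hid.symm
      _ = 2 ^ t * (2 ^ d * A) := by rw [hsplit]; ring
  constructor
  · apply (Int.modEq_iff_dvd.mpr _)
    obtain ⟨c, hc⟩ := hdvdA
    refine ⟨c, ?_⟩
    have hcast : (Nat.choose (2 ^ e) (2 ^ t) : ℤ) = 2 ^ d * (A : ℤ) := by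
      exact_mod_cast congrArg (fun x : ℕ => (x : ℤ)) hkey
    rw [hcast]
    have : (2:ℤ) ^ (2 * d + 1) = 2 ^ d * 2 ^ (d + 1) := by
      rw [← pow_add]
      congr 1
      omega
    rw [this]
    calc (2:ℤ) ^ d - -(2 ^ d * (A:ℤ)) = 2 ^ d * ((A : ℤ) + 1) := by ring
      _ = 2 ^ d * (2 ^ (d + 1) * c) := by rw [hc]
      _ = 2 ^ d * 2 ^ (d + 1) * c := by ring
  · have hAodd : ¬ (2 ∣ A) := by
      intro hdvd
      have hh2 : (2 : ℤ) ∣ (A : ℤ) := by exact_mod_cast hdvd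
      have h2' : (2 : ℤ) ∣ (A : ℤ) + 1 :=
        dvd_trans (dvd_pow_self 2 (Nat.succ_ne_zero d)) hdvdA
      have : (2 : ℤ) ∣ 1 := (dvd_add_right hh2).mp h2'
      norm_num at this
    have hApos : A ≠ 0 := by
      have : 0 < A := Nat.choose_pos (by
        have : 2 ^ t ≤ 2 ^ e := Nat.pow_le_pow_right (by norm_num) h2
        omega)
      omega
    rw [hkey, padicValNat.mul (by positivity) hApos, padicValNat.prime_pow,
      padicValNat.eq_zero_of_not_dvd hAodd]
    omega
end

section
/- If m is a positive integer with ν(m) = k, then the 2-adic valuation of the product m(m-1)(m-2)⋯(m-2^k+1) of 2^k consecutive integers ending at m equals 2^k - 1. -/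
private lemma digitsum_aux (k t : ℕ) (ht : Odd t) :
    (Nat.digits 2 (2 ^ k * t)).sum = (Nat.digits 2 (2 ^ k * t - 2 ^ k)).sum + 1 := by
  obtain ⟨e, rfl⟩ := ht
  have h1 : 2 ^ k * (2 * e + 1) - 2 ^ k = 2 ^ k * (2 * e) := by ring_nf; omega
  rw [h1, Nat.digits_base_pow_mul one_lt_two (by omega)]
  rcases Nat.eq_zero_or_pos e with rfl | he
  · simp [Nat.digits_base_pow_mul one_lt_two (show 0 < 2*0+1 by norm_num)]
  · rw [Nat.digits_base_pow_mul one_lt_two (by omega)]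
    have d1 : Nat.digits 2 (2 * e + 1) = 1 :: Nat.digits 2 e := by
      rw [Nat.digits_def' one_lt_two (show 0 < 2 * e + 1 by omega)]
      congr 1
      · omega
      · congr 1; omega
    have d2 : Nat.digits 2 (2 * e) = 0 :: Nat.digits 2 e := by
      rw [Nat.digits_def' one_lt_two (show 0 < 2 * e by omega)]
      congr 1
      · omega
      · congr 1; omega
    rw [d1, d2]
    simp
    omega

theorem stmt10 (m k : ℕ) (hm : 0 < m) (hk : padicValNat 2 m = k) (hmk : 2 ^ k ≤ m) :
    padicValNat 2 (∏ i ∈ Finset.range (2 ^ k), (m - i)) = 2 ^ k - 1 := by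
  have hprod : (∏ i ∈ Finset.range (2 ^ k), (m - i)) = m.descFactorial (2 ^ k) :=
    (Nat.descFactorial_eq_prod_range m (2 ^ k)).symm
  rw [hprod]
  -- m = 2^k * t with t odd
  have hdvd : 2 ^ k ∣ m := hk ▸ pow_padicValNat_dvd
  have hndvd : ¬ 2 ^ (k + 1) ∣ m := by
    intro h
    rw [padicValNat_dvd_iff_le hm.ne'] at h
    omega
  obtain ⟨t, rfl⟩ := hdvd
  have ht : Odd t := by
    rcases Nat.even_or_odd t with he | ho
    · obtain ⟨u, rfl⟩ := he
      exact absurd ⟨u, by ring⟩ hndvd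
    · exact ho
  -- factorial identity
  have hfac : Nat.factorial (2 ^ k * t - 2 ^ k) * (2 ^ k * t).descFactorial (2 ^ k) = Nat.factorial (2 ^ k * t) :=
    Nat.factorial_mul_descFactorial hmk
  have hDpos : 0 < (2 ^ k * t).descFactorial (2 ^ k) := Nat.pos_of_ne_zero (fun h => by have := Nat.descFactorial_eq_zero_iff_lt.mp h; omega)
  have hv : padicValNat 2 (Nat.factorial (2 ^ k * t)) =
      padicValNat 2 (Nat.factorial (2 ^ k * t - 2 ^ k)) +
        padicValNat 2 ((2 ^ k * t).descFactorial (2 ^ k)) := by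
    rw [← hfac, padicValNat.mul (Nat.factorial_ne_zero _) hDpos.ne']
  have hleg1 : padicValNat 2 (Nat.factorial (2 ^ k * t)) = 2 ^ k * t - (Nat.digits 2 (2 ^ k * t)).sum := by
    have := sub_one_mul_padicValNat_factorial (p := 2) (2 ^ k * t)
    simpa using this
  have hleg2 : padicValNat 2 (Nat.factorial (2 ^ k * t - 2 ^ k)) =
      (2 ^ k * t - 2 ^ k) - (Nat.digits 2 (2 ^ k * t - 2 ^ k)).sum := by
    have := sub_one_mul_padicValNat_factorial (p := 2) (2 ^ k * t - 2 ^ k)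
    simpa using this
  have hds := digitsum_aux k t ht
  have hb1 : (Nat.digits 2 (2 ^ k * t)).sum ≤ 2 ^ k * t := Nat.digit_sum_le 2 _
  have hb2 : (Nat.digits 2 (2 ^ k * t - 2 ^ k)).sum ≤ 2 ^ k * t - 2 ^ k := Nat.digit_sum_le 2 _
  have hpk : 0 < 2 ^ k := Nat.pow_pos (by norm_num)
  omega
end
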